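/- A self-adjoint operator on a complex Hilbert space of dimension greater than 1 is not weakly supercyclic. -/

import Mathlib

open Filter Topology ComplexConjugate

/-- The projective orbit of `y` under `T`. -/
def projOrbit {H : Type*} [NormedAddCommGroup H] [InnerProductSpace ℂ H]
    (T : H →L[ℂ] H) (y : H) : Set H :=
  {z | ∃ (α : ℂ) (n : ℕ), z = α • (T ^ n) y}

/-- A self-adjoint operator on a complex Hilbert space of dimension
greater than 1 is not weakly supercyclic. -/
theorem selfAdjoint_not_weaklySupercyclic
    {H : Type*} [NormedAddCommGroup H] [InnerProductSpace ℂ H] [CompleteSpace H]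
    (hdim : 1 < Module.rank ℂ H)
    (T : H →L[ℂ] H) (hT : IsSelfAdjoint T) :
    ¬ ∃ y : H, Dense (toWeakSpace ℂ H '' projOrbit T y) := by
  rintro ⟨y, hy⟩
  -- weak continuity of inner ℂ functionals
  have hcont : ∀ v : H, Continuous fun z : WeakSpace ℂ H =>
      (inner ℂ v ((toWeakSpace ℂ H).symm z) : ℂ) :=
    fun v => WeakBilin.eval_continuous (topDualPairing ℂ H).flip (innerSL ℂ v)
  -- ⟪y, T^n y⟫ is real for all n
  have hreal : ∀ n : ℕ, (starRingEnd ℂ) (inner ℂ y ((T ^ n) y) : ℂ) = inner ℂ y ((T ^ n) y) := by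
    intro n
    rw [inner_conj_symm]
    exact (hT.pow n).isSymmetric y y
  -- density of the orbit makes any weakly continuous function vanishing on the orbit vanish
  have vanish : ∀ v : H, (∀ z ∈ projOrbit T y, (inner ℂ v z : ℂ) = 0) → ∀ z : H,
      (inner ℂ v z : ℂ) = 0 := by
    intro v hv z
    have hf : Continuous fun w : WeakSpace ℂ H =>
        (inner ℂ v ((toWeakSpace ℂ H).symm w) : ℂ) := hcont v
    have heq : (fun w : WeakSpace ℂ H => (inner ℂ v ((toWeakSpace ℂ H).symm w) : ℂ)) =
        fun _ => (0 : ℂ) := by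
      apply Continuous.ext_on hy hf continuous_const
      rintro _ ⟨z', hz', rfl⟩
      simpa using hv z' hz'
    have := congrFun heq (toWeakSpace ℂ H z)
    simpa using this
  -- the key identity on all of H
  have key : ∀ z : H, ((inner ℂ y z : ℂ) * conj (inner ℂ (T y) z : ℂ)).im = 0 := by
    intro z
    have hf : Continuous fun w : WeakSpace ℂ H =>
        ((inner ℂ y ((toWeakSpace ℂ H).symm w) : ℂ) *
          conj (inner ℂ (T y) ((toWeakSpace ℂ H).symm w) : ℂ)).im :=
      Complex.continuous_im.comp ((hcont y).mul (hcont (T y)).star)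
    have heq : (fun w : WeakSpace ℂ H =>
        ((inner ℂ y ((toWeakSpace ℂ H).symm w) : ℂ) *
          conj (inner ℂ (T y) ((toWeakSpace ℂ H).symm w) : ℂ)).im) = fun _ => (0 : ℝ) := by
      apply Continuous.ext_on hy hf continuous_const
      rintro _ ⟨z', ⟨α, n, rfl⟩, rfl⟩
      simp only [LinearEquiv.symm_apply_apply]
      have h1 : (inner ℂ y (α • (T ^ n) y) : ℂ) = α * inner ℂ y ((T ^ n) y) := by
        rw [inner_smul_right]
      have h2 : (inner ℂ (T y) (α • (T ^ n) y) : ℂ) = α * inner ℂ y ((T ^ (n + 1)) y) := by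
        rw [inner_smul_right]
        congr 1
        have : (T ^ (n + 1)) y = T ((T ^ n) y) := by
          rw [pow_succ']
          rfl
        rw [this]
        exact hT.isSymmetric y ((T ^ n) y)
      have hr := hreal n
      have hs := hreal (n + 1)
      rw [Complex.conj_eq_iff_im] at hr hs
      simp only [h1, h2, map_mul]
      set r := (inner ℂ y ((T ^ n) y) : ℂ)
      set s := (inner ℂ y ((T ^ (n + 1)) y) : ℂ)
      have : α * r * (conj α * conj s) = (α * conj α) * (r * s) := by
        rw [Complex.conj_eq_iff_im.mpr hs] -- conj s = s? no
        ring
      rw [this, Complex.mul_conj]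
      simp [Complex.mul_im, hr, hs]
    have := congrFun heq (toWeakSpace ℂ H z)
    simpa using this
  -- case split on whether T y is a multiple of y
  by_cases hdep : ∃ c : ℂ, T y = c • y
  · -- orbit lies in span of y; use a nonzero orthogonal vector
    obtain ⟨c, hc⟩ := hdep
    have hpow : ∀ n : ℕ, (T ^ n) y = c ^ n • y := by
      intro n
      induction n with
      | zero => simp
      | succ n ih =>
        have : (T ^ (n + 1)) y = T ((T ^ n) y) := by rw [pow_succ']; rfl
        rw [this, ih, map_smul, hc, smul_smul, ← pow_succ]
    -- the span of y is not everything
    have hspan : (ℂ ∙ y) ≠ ⊤ := by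
      intro h
      have : Module.rank ℂ H ≤ 1 := by
        have := rank_span_le (R := ℂ) ({y} : Set H)
        rw [h] at this
        simpa using this.trans (by simp [Cardinal.mk_singleton])
      exact absurd this (not_le.mpr hdim)
    have : ((ℂ ∙ y)ᗮ : Submodule ℂ H) ≠ ⊥ := by
      intro h
      exact hspan (Submodule.orthogonal_eq_bot_iff.mp h)
    obtain ⟨u, hu_mem, hu0⟩ := Submodule.exists_mem_ne_zero_of_ne_bot this
    have huy : (inner ℂ u y : ℂ) = 0 := by
      have := (Submodule.mem_orthogonal _ u).mp hu_mem y (Submodule.mem_span_singleton_self y)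
      rw [← inner_conj_symm, this, map_zero]
    have : (inner ℂ u u : ℂ) = 0 := by
      apply vanish u _ u
      rintro z ⟨α, n, rfl⟩
      rw [hpow n, inner_smul_right, inner_smul_right, huy]
      ring
    exact hu0 (inner_self_eq_zero.mp this)
  · -- T y not a multiple of y : contradict the key identity
    have hy0 : y ≠ 0 := by
      intro h
      exact hdep ⟨0, by simp [h]⟩
    have hyy : (inner ℂ y y : ℂ) ≠ 0 := by
      simpa [inner_self_eq_zero] using hy0
    set d : ℂ := inner ℂ y (T y) / inner ℂ y y with hd
    set w : H := T y - d • y with hw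
    have hw0 : w ≠ 0 := by
      intro h
      apply hdep
      exact ⟨d, by rwa [hw, sub_eq_zero] at h⟩
    have hyw : (inner ℂ y w : ℂ) = 0 := by
      rw [hw, inner_sub_right, inner_smul_right, hd, div_mul_cancel₀ _ hyy, sub_self]
    have hTyw : (inner ℂ (T y) w : ℂ) = inner ℂ w w := by
      have : T y = w + d • y := by rw [hw]; abel
      rw [this, inner_add_left, inner_smul_left]
      rw [hyw, mul_zero, add_zero]
    have hww : (inner ℂ w w : ℂ) ≠ 0 := by
      simpa [inner_self_eq_zero] using hw0
    set a : ℂ := (inner ℂ y y : ℂ)⁻¹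
    set b : ℂ := (Complex.I - a * inner ℂ (T y) y) / inner ℂ w w
    set z : H := a • y + b • w
    have hz1 : (inner ℂ y z : ℂ) = 1 := by
      simp only [z, inner_add_right, inner_smul_right, hyw, mul_zero, add_zero]
      exact inv_mul_cancel₀ hyy
    have hz2 : (inner ℂ (T y) z : ℂ) = Complex.I := by
      simp only [z, inner_add_right, inner_smul_right, hTyw]
      rw [div_mul_cancel₀ _ hww]
      ring
    have := key z
    rw [hz1, hz2, one_mul] at this
    simp [Complex.conj_I] at this
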